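/- For n \ge 1 and any integer k, B_n^{(k)}(1) - B_n^{(k)} = \sum_{m=1}^{n} S_1(n,m) / m^{k-1}, where S_1(n,m) are the (signed) Stirling numbers of the first kind. -/

import Mathlib

noncomputable section

/-- Signed Stirling numbers of the first kind. -/
def stirling1 : ℕ → ℕ → ℤ
  | 0, 0 => 1
  | 0, _ + 1 => 0
  | _ + 1, 0 => 0
  | n + 1, m + 1 => stirling1 n m - n * stirling1 n (m + 1)

/-- `n!`-normalized coefficients of `Ei_k (log (1+t))`. -/
def polyExpCoeff (k : ℤ) (n : ℕ) : ℚ :=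
  ∑ m ∈ Finset.Icc 1 n, (stirling1 n m : ℚ) / (m : ℚ) ^ (k - 1)

/-- Type 2 poly-Bernoulli numbers of index `k`, defined by the recursion coming from the
generating function `Ei_k (log (1+t)) / (e^t - 1) = ∑ B_n^{(k)} t^n/n!`. -/
def polyBernoulli (k : ℤ) : ℕ → ℚ
  | n =>
    (polyExpCoeff k (n + 1) -
      ∑ l ∈ (Finset.range n).attach, ((n + 1).choose l.1 : ℚ) * polyBernoulli k l.1) / (n + 1)
  termination_by n => n
  decreasing_by exact Finset.mem_range.mp l.2

/-- Type 2 poly-Bernoulli polynomials of index `k`, as functions on `ℝ`. -/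
def polyBernoulliPoly (k : ℤ) (n : ℕ) (x : ℝ) : ℝ :=
  ∑ l ∈ Finset.range (n + 1), (n.choose l : ℝ) * (polyBernoulli k l : ℝ) * x ^ (n - l)

/-- Bernoulli polynomials as functions on `ℝ`. -/
def bernoulliPolyFun (n : ℕ) (x : ℝ) : ℝ :=
  ∑ l ∈ Finset.range (n + 1), (n.choose l : ℝ) * (bernoulli l : ℝ) * x ^ (n - l)

/-- Bernoulli functions `B̄_n(x) = B_n(⟨x⟩)`. -/
def bernoulliBar (n : ℕ) (x : ℝ) : ℝ := bernoulliPolyFun n (Int.fract x)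

/-- Type 2 poly-Bernoulli functions `B̄_n^{(k)}(x) = B_n^{(k)}(⟨x⟩)`. -/
def polyBernoulliBar (k : ℤ) (n : ℕ) (x : ℝ) : ℝ := polyBernoulliPoly k n (Int.fract x)

/-- Poly-Dedekind sums `S_p^{(k)}(h,m)`. -/
def polyDedekindSum (k : ℤ) (p h m : ℕ) : ℝ :=
  ∑ μ ∈ Finset.Ico 1 m, (μ / m : ℝ) * polyBernoulliBar k p (h * μ / m)

/-- Apostol's generalized Dedekind sums `S_p(h,m)`. -/
def genDedekindSum (p h m : ℕ) : ℝ :=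
  ∑ μ ∈ Finset.Ico 1 m, (μ / m : ℝ) * bernoulliBar p (h * μ / m)

/-- The polyexponential function `Ei_k`. -/
def polyExp (k : ℤ) (x : ℝ) : ℝ :=
  ∑' n : ℕ, x ^ (n + 1) / ((n + 1 : ℝ) ^ k * (Nat.factorial n : ℝ))

/-- The sawtooth function `((x))`. -/
def sawtooth (x : ℝ) : ℝ := if Int.fract x = 0 then 0 else Int.fract x - 1 / 2

end

lemma sum_choose_polyBernoulli (k : ℤ) (m : ℕ) :
    ∑ l ∈ Finset.range (m + 1), ((m + 1).choose l : ℚ) * polyBernoulli k l =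
      polyExpCoeff k (m + 1) := by
  rw [Finset.sum_range_succ]
  conv_lhs => rw [polyBernoulli]
  rw [Finset.sum_attach (Finset.range m)
    (fun l => ((m + 1).choose l : ℚ) * polyBernoulli k l)]
  have h1 : ((m + 1).choose m : ℚ) = (m + 1 : ℚ) := by
    rw [Nat.choose_succ_self_right]; push_cast; ring
  rw [h1]
  have h2 : (m + 1 : ℚ) ≠ 0 := by positivity
  field_simp
  ring

/-- `B_n^{(k)}(1) - B_n^{(k)} = ∑_{m=1}^n S_1(n,m)/m^{k-1}`. -/
theorem polyBernoulliPoly_one_sub (k : ℤ) (n : ℕ) (hn : 1 ≤ n) :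
    polyBernoulliPoly k n 1 - (polyBernoulli k n : ℝ) =
      ∑ m ∈ Finset.Icc 1 n, (stirling1 n m : ℝ) / (m : ℝ) ^ (k - 1) := by
  obtain ⟨m, rfl⟩ : ∃ m, n = m + 1 := ⟨n - 1, (Nat.succ_pred_eq_of_pos hn).symm⟩
  have key : (∑ l ∈ Finset.range (m + 2), ((m + 1).choose l : ℚ) * polyBernoulli k l)
      - polyBernoulli k (m + 1) = polyExpCoeff k (m + 1) := by
    rw [Finset.sum_range_succ, Nat.choose_self]
    simpa using sum_choose_polyBernoulli k m
  have h2 : polyBernoulliPoly k (m + 1) 1 - (polyBernoulli k (m + 1) : ℝ) =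
      ((polyExpCoeff k (m + 1) : ℚ) : ℝ) := by
    rw [← key, polyBernoulliPoly]
    push_cast
    simp
  rw [h2, polyExpCoeff]
  push_cast
  rfl
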